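/- Let p be an odd prime and λ ∈ F_p with λ ∉ {0,1}. Then Σ_{x∈F_p} phi(x)phi(x-1)phi(x-λ) = p·phi(-1)·₂F₁(phi,phi;ε|λ), where phi is the quadratic character and ₂F₁ Greene's hypergeometric series; equivalently, the Legendre curve y²=x(x-1)(x-λ) has 1 + p + p·phi(-1)·₂F₁(phi,phi;ε|λ) points over F_p including the point at infinity. -/

import Mathlib

open Finset

noncomputable def phiChar (p : ℕ) [Fact p.Prime] : MulChar (ZMod p) ℂ :=
  (quadraticChar (ZMod p)).ringHomComp (Int.castRingHom ℂ)

noncomputable def gbinom {p : ℕ} [Fact p.Prime] (A B : MulChar (ZMod p) ℂ) : ℂ :=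
  (B (-1) / p) * jacobiSum A B⁻¹

noncomputable def twoF1 {p : ℕ} [Fact p.Prime] (A B C : MulChar (ZMod p) ℂ) (x : ZMod p) : ℂ :=
  ((p : ℂ) / (p - 1)) * ∑ χ : MulChar (ZMod p) ℂ, gbinom (A * χ) χ * gbinom (B * χ) (C * χ) * χ x

namespace Stmt18Aux

variable {p : ℕ} [Fact p.Prime]

lemma phi_sq {a : ZMod p} (ha : a ≠ 0) : phiChar p a * phiChar p a = 1 := by
  have h := quadraticChar_sq_one ha
  have h2 : phiChar p a = ((quadraticChar (ZMod p) a : ℤ) : ℂ) := rfl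
  rw [h2, ← Int.cast_mul, ← sq, h, Int.cast_one]

lemma phi_ne_zero {a : ZMod p} (ha : a ≠ 0) : phiChar p a ≠ 0 :=
  left_ne_zero_of_mul_eq_one (phi_sq ha)

lemma phi_inv (a : ZMod p) : phiChar p a⁻¹ = phiChar p a := by
  rcases eq_or_ne a 0 with rfl | ha
  · rw [inv_zero]
  · have h : phiChar p a * phiChar p a⁻¹ = 1 := by
      rw [← map_mul, mul_inv_cancel₀ ha, map_one]
    exact mul_left_cancel₀ (phi_ne_zero ha) (h.trans (phi_sq ha).symm)

lemma cond_iff {lam : ZMod p} (h0 : lam ≠ 0) (s t : ZMod p) (hs : s ≠ 0) (hs1 : s ≠ 1)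
    (hd : s * (1 - lam) - 1 ≠ 0) :
    s * (1-s)⁻¹ * (t * (1-t)⁻¹) * lam = 1 ↔ t = (s - 1) * (s * (1 - lam) - 1)⁻¹ := by
  have hs1' : (1 : ZMod p) - s ≠ 0 := sub_ne_zero.mpr (Ne.symm hs1)
  constructor
  · intro hu
    have ht1 : (1 : ZMod p) - t ≠ 0 := by
      intro h; simp [h] at hu
    have ht : t ≠ 0 := by
      intro h; simp [h] at hu
    have heq : s * t * lam = (1 - s) * (1 - t) := by
      field_simp at hu
      linear_combination hu
    rw [eq_mul_inv_iff_mul_eq₀ hd]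
    linear_combination -heq
  · rintro rfl
    have h2 : (1 - (s - 1) * (s * (1 - lam) - 1)⁻¹) = (-(s*lam)) * (s * (1 - lam) - 1)⁻¹ := by
      field_simp
      ring
    rw [h2, mul_inv, inv_inv]
    have hsl : -(s*lam) ≠ 0 := neg_ne_zero.mpr (mul_ne_zero hs h0)
    field_simp
    ring

lemma inner_t {lam : ZMod p} (h0 : lam ≠ 0) (s : ZMod p) :
    ∑ t : ZMod p, (if s * (1-s)⁻¹ * (t * (1-t)⁻¹) * lam = 1 then phiChar p s * phiChar p t else 0)
    = phiChar p s * phiChar p (s-1) * phiChar p (s*(1-lam)-1) := by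
  by_cases hs : s = 0
  · subst hs; simp [MulChar.map_zero]
  by_cases hs1 : s = 1
  · subst hs1; simp [MulChar.map_zero]
  by_cases hd : s * (1 - lam) - 1 = 0
  · rw [hd, MulChar.map_zero, mul_zero]
    refine Finset.sum_eq_zero fun t _ => ?_
    rw [if_neg]
    intro hu
    have hs1' : (1 : ZMod p) - s ≠ 0 := sub_ne_zero.mpr (Ne.symm hs1)
    have ht1 : (1 : ZMod p) - t ≠ 0 := by
      intro h; simp [h] at hu
    have ht : t ≠ 0 := by
      intro h; simp [h] at hu
    have heq : s * t * lam = (1 - s) * (1 - t) := by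
      field_simp at hu
      linear_combination hu
    have hz : s - 1 = 0 := by linear_combination heq + t * hd
    exact hs1' (by linear_combination -hz)
  · have hc : ∀ t : ZMod p,
        (if s * (1-s)⁻¹ * (t * (1-t)⁻¹) * lam = 1 then phiChar p s * phiChar p t else 0)
        = (if t = (s - 1) * (s * (1 - lam) - 1)⁻¹ then phiChar p s * phiChar p t else 0) :=
      fun t => if_congr (cond_iff h0 s t hs hs1 hd) rfl rfl
    rw [Finset.sum_congr rfl fun t _ => hc t, Finset.sum_ite_eq' univ, if_pos (mem_univ _),
      map_mul, phi_inv, mul_assoc]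

lemma sum_shift (lam : ZMod p) :
    ∑ s : ZMod p, phiChar p s * phiChar p (s-1) * phiChar p (s*(1-lam)-1)
    = phiChar p (-1) * ∑ x : ZMod p, phiChar p x * phiChar p (x-1) * phiChar p (x-lam) := by
  have step1 : ∑ s : ZMod p, phiChar p s * phiChar p (s-1) * phiChar p (s*(1-lam)-1)
      = ∑ x : ZMod p, phiChar p x * phiChar p (1-x) * phiChar p ((1-lam)-x) := by
    refine Fintype.sum_bijective (·⁻¹) (inv_involutive.bijective) _ _ fun x => ?_
    rcases eq_or_ne x 0 with rfl | hx
    · simp [MulChar.map_zero]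
    · have e1 : 1 - x⁻¹ = x⁻¹ * (x - 1) := by field_simp
      have e2 : (1-lam) - x⁻¹ = x⁻¹ * (x*(1-lam) - 1) := by field_simp
      rw [e1, e2, map_mul, map_mul, phi_inv]
      have hsq := phi_sq hx
      linear_combination (-(phiChar p x * phiChar p (x-1) * phiChar p (x*(1-lam)-1))) * hsq
  rw [step1, Finset.mul_sum]
  refine Fintype.sum_bijective (1 - ·) (Function.Involutive.bijective fun y => sub_sub_cancel 1 y)
    _ _ fun x => ?_
  have hm : (-1 : ZMod p) ≠ 0 := neg_ne_zero.mpr one_ne_zero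
  have hsqm := phi_sq hm
  have e3 : (1:ZMod p) - x - 1 = (-1) * x := by ring
  have e4 : (1:ZMod p) - x - lam = (1-lam) - x := by ring
  simp only [e3, e4, map_mul]
  have e5 : (1:ZMod p) - x = (-1) * (x - 1) := by ring
  rw [e5, map_mul]
  linear_combination (-(phiChar p (-1) * phiChar p (x-1) * phiChar p x * phiChar p ((1-lam)-x)))
    * hsqm

lemma sum_chars (a : ZMod p) :
    ∑ χ : MulChar (ZMod p) ℂ, χ a = if a = 1 then ((p : ℂ) - 1) else 0 := by
  haveI : NeZero p := ⟨(Fact.out : p.Prime).ne_zero⟩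
  have h := DirichletCharacter.sum_characters_eq (R := ℂ) (n := p) a
  rw [Nat.totient_prime Fact.out] at h
  rw [h]
  congr 1
  push_cast [Nat.cast_sub (Fact.out : p.Prime).one_lt.le]
  ring

lemma expand_term (lam : ZMod p) (χ : MulChar (ZMod p) ℂ) :
    jacobiSum (phiChar p * χ) χ⁻¹ * jacobiSum (phiChar p * χ) χ⁻¹ * χ lam
    = ∑ s : ZMod p, ∑ t : ZMod p,
        phiChar p s * phiChar p t * χ (s * (1-s)⁻¹ * (t * (1-t)⁻¹) * lam) := by
  rw [jacobiSum, Finset.sum_mul_sum, Finset.sum_mul]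
  refine Finset.sum_congr rfl fun s _ => ?_
  rw [Finset.sum_mul]
  refine Finset.sum_congr rfl fun t _ => ?_
  simp only [MulChar.coeToFun_mul, Pi.mul_apply, MulChar.inv_apply']
  rw [show (phiChar p) s * χ s * χ (1 - s)⁻¹ * ((phiChar p) t * χ t * χ (1 - t)⁻¹) * χ lam
      = phiChar p s * phiChar p t * (χ s * χ (1-s)⁻¹ * (χ t * χ (1-t)⁻¹) * χ lam) from by ring,
    ← map_mul, ← map_mul, ← map_mul, ← map_mul, ← map_mul χ]

lemma key {lam : ZMod p} (h0 : lam ≠ 0) :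
    ∑ χ : MulChar (ZMod p) ℂ,
        jacobiSum (phiChar p * χ) χ⁻¹ * jacobiSum (phiChar p * χ) χ⁻¹ * χ lam
    = ((p : ℂ) - 1) * (phiChar p (-1) *
        ∑ x : ZMod p, phiChar p x * phiChar p (x-1) * phiChar p (x-lam)) := by
  rw [Finset.sum_congr rfl fun χ _ => expand_term lam χ, Finset.sum_comm]
  have swap2 : ∀ s : ZMod p,
      (∑ χ : MulChar (ZMod p) ℂ, ∑ t : ZMod p,
        phiChar p s * phiChar p t * χ (s * (1-s)⁻¹ * (t * (1-t)⁻¹) * lam))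
      = ∑ t : ZMod p, (if s * (1-s)⁻¹ * (t * (1-t)⁻¹) * lam = 1
          then phiChar p s * phiChar p t else 0) * ((p:ℂ) - 1) := by
    intro s
    rw [Finset.sum_comm]
    refine Finset.sum_congr rfl fun t _ => ?_
    rw [← Finset.mul_sum, sum_chars]
    split_ifs <;> ring
  rw [Finset.sum_congr rfl fun s _ => swap2 s]
  have h3 : ∀ s : ZMod p,
      (∑ t : ZMod p, (if s * (1-s)⁻¹ * (t * (1-t)⁻¹) * lam = 1
          then phiChar p s * phiChar p t else 0) * ((p:ℂ) - 1))
      = (phiChar p s * phiChar p (s-1) * phiChar p (s*(1-lam)-1)) * ((p:ℂ)-1) := by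
    intro s
    rw [← Finset.sum_mul, inner_t h0 s]
  rw [Finset.sum_congr rfl fun s _ => h3 s, ← Finset.sum_mul, sum_shift]
  ring

end Stmt18Aux

open Stmt18Aux in
theorem stmt_18 (p : ℕ) [Fact p.Prime] (hp : p ≠ 2) (lam : ZMod p) (h0 : lam ≠ 0)
    (h1 : lam ≠ 1) :
    (∑ x : ZMod p, phiChar p x * phiChar p (x - 1) * phiChar p (x - lam)) =
      (p : ℂ) * phiChar p (-1) * twoF1 (phiChar p) (phiChar p) 1 lam ∧
    ((univ.filter (fun xy : ZMod p × ZMod p =>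
        xy.2 ^ 2 = xy.1 * (xy.1 - 1) * (xy.1 - lam))).card : ℂ) + 1 =
      1 + (p : ℂ) + p * phiChar p (-1) * twoF1 (phiChar p) (phiChar p) 1 lam := by
  have hp0 : (p : ℂ) ≠ 0 := Nat.cast_ne_zero.mpr (Fact.out : p.Prime).ne_zero
  have hp1 : (p : ℂ) - 1 ≠ 0 := by
    rw [sub_ne_zero]
    exact_mod_cast (Fact.out : p.Prime).one_lt.ne'
  have hm : (-1 : ZMod p) ≠ 0 := neg_ne_zero.mpr one_ne_zero
  have hsqm := phi_sq hm
  -- Part 1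
  have part1 : (∑ x : ZMod p, phiChar p x * phiChar p (x - 1) * phiChar p (x - lam)) =
      (p : ℂ) * phiChar p (-1) * twoF1 (phiChar p) (phiChar p) 1 lam := by
    have hneg : ∀ χ : MulChar (ZMod p) ℂ, χ (-1) * χ (-1) = 1 := by
      intro χ
      rw [← map_mul, neg_mul_neg, one_mul, map_one]
    have hterm : ∀ χ : MulChar (ZMod p) ℂ,
        gbinom (phiChar p * χ) χ * gbinom (phiChar p * χ) (1 * χ) * χ lam
        = (1/(p:ℂ)) * ((1/(p:ℂ)) * (jacobiSum (phiChar p * χ) χ⁻¹ *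
            jacobiSum (phiChar p * χ) χ⁻¹ * χ lam)) := by
      intro χ
      rw [one_mul, gbinom]
      calc (χ (-1) / p * jacobiSum (phiChar p * χ) χ⁻¹) *
            (χ (-1) / p * jacobiSum (phiChar p * χ) χ⁻¹) * χ lam
          = (χ (-1) * χ (-1)) * ((1/(p:ℂ)) * ((1/(p:ℂ)) * (jacobiSum (phiChar p * χ) χ⁻¹ *
              jacobiSum (phiChar p * χ) χ⁻¹ * χ lam))) := by ring
        _ = _ := by rw [hneg χ, one_mul]
    rw [twoF1, Finset.sum_congr rfl fun χ _ => hterm χ, ← Finset.mul_sum, ← Finset.mul_sum,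
      key h0]
    field_simp
    linear_combination (-
      (∑ x : ZMod p, phiChar p x * phiChar p (x - 1) * phiChar p (x - lam))) * hsqm
  refine ⟨part1, ?_⟩
  -- Part 2
  have hchar : ringChar (ZMod p) ≠ 2 := by
    rw [ZMod.ringChar_zmod_n]
    exact_mod_cast hp
  have hcount : ∀ a : ZMod p,
      (((univ.filter (fun y : ZMod p => y ^ 2 = a)).card : ℂ)) = 1 + phiChar p a := by
    intro a
    have h := quadraticChar_card_sqrts hchar a
    rw [Set.toFinset_setOf] at h
    have : phiChar p a = ((quadraticChar (ZMod p) a : ℤ) : ℂ) := rfl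
    rw [this]
    rw [show (((univ.filter (fun y : ZMod p => y ^ 2 = a)).card : ℂ))
        = (((univ.filter (fun y : ZMod p => y ^ 2 = a)).card : ℤ) : ℂ) by push_cast; ring, h]
    push_cast
    ring
  have hcard : ((univ.filter (fun xy : ZMod p × ZMod p =>
        xy.2 ^ 2 = xy.1 * (xy.1 - 1) * (xy.1 - lam))).card : ℂ)
      = ∑ x : ZMod p, ((univ.filter (fun y : ZMod p =>
          y ^ 2 = x * (x - 1) * (x - lam))).card : ℂ) := by
    rw [Finset.card_filter]
    push_cast
    rw [Fintype.sum_prod_type]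
    refine Finset.sum_congr rfl fun x _ => ?_
    rw [Finset.card_filter]
    push_cast
    rfl
  rw [hcard, Finset.sum_congr rfl fun x _ => hcount (x * (x-1) * (x-lam))]
  rw [Finset.sum_add_distrib, Finset.sum_const, Finset.card_univ, ZMod.card]
  have : ∑ x : ZMod p, phiChar p (x * (x - 1) * (x - lam))
      = ∑ x : ZMod p, phiChar p x * phiChar p (x - 1) * phiChar p (x - lam) :=
    Finset.sum_congr rfl fun x _ => by rw [map_mul, map_mul]
  rw [this, part1]
  push_cast
  ring
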